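/- Let A be a Q(q)-algebra, x, y ∈ A satisfying the a_{ij} = −2 quantum Serre relation ∑_{r+s=3} (−1)^r x^{(r)} y x^{(s)} = 0, where x^{(k)} = x^k/[k]_{q}!. Then for every m ≥ 3 and e ∈ {±1}: ∑_{r+s=m} (−1)^r q^{e r (3−m)} x^{(r)} y x^{(s)} = 0. -/

import Mathlib

noncomputable section

abbrev K : Type := RatFunc ℚ

/-- The indeterminate `q` in `ℚ(q)`. -/
def qq : K := RatFunc.X

/-- Balanced quantum integer at base `x`. -/
def qintx (x : K) (m : ℤ) : K := (x ^ m - x ^ (-m)) / (x - x⁻¹)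

/-- Balanced quantum integer `[m]_q`. -/
def qint (m : ℤ) : K := qintx qq m

/-- Quantum factorial at base `x`. -/
def qfactx (x : K) (m : ℕ) : K := ∏ j ∈ Finset.range m, qintx x ((j : ℤ) + 1)

/-- Quantum factorial `[m]_q!`. -/
def qfact (m : ℕ) : K := qfactx qq m

/-- Gaussian binomial coefficient at base `x` (zero when `r > m`). -/
def qbinomx (x : K) (m r : ℕ) : K :=
  if r ≤ m then qfactx x m / (qfactx x r * qfactx x (m - r)) else 0

/-- Gaussian binomial coefficient. -/
def qbinom (m r : ℕ) : K := qbinomx qq m r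

/-- The ı-divided powers `B^{(m)}_{p̄}` of `B` with central parameter `Z`,
given by the closed product formulas of the paper. -/
def iDP {A : Type*} [Ring A] [Algebra K A] (B Z : A) (p : ZMod 2) (m : ℕ) : A :=
  (qfact m)⁻¹ •
    ((if m % 2 = 1 then B else 1) *
      ((List.range (m / 2)).map (fun j =>
        B ^ 2 -
          ((qint (if p = 1 then 2 * (j : ℤ) + 1
                  else if m % 2 = 1 then 2 * (j : ℤ) + 2 else 2 * (j : ℤ))) ^ 2 * qq) • Z)).prod)

/-- The usual divided power `x^{(k)} = x^k/[k]_q!`. -/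
def dp {A : Type*} [Ring A] [Algebra K A] (x : A) (k : ℕ) : A := (qfact k)⁻¹ • x ^ k

lemma qq_ne_zero : qq ≠ 0 := RatFunc.X_ne_zero

lemma qq_pow_ne_one (n : ℕ) (hn : n ≠ 0) : qq ^ n ≠ 1 := by
  intro hcon
  have h2 : (Polynomial.X : Polynomial ℚ) ^ n = 1 := by
    apply RatFunc.algebraMap_injective ℚ
    simpa [qq, map_pow, RatFunc.algebraMap_X] using hcon
  have := congrArg Polynomial.natDegree h2
  simp [Polynomial.natDegree_X_pow] at this
  exact hn this

lemma denom_ne : qq - qq⁻¹ ≠ 0 := by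
  intro hcon
  have h1 : qq = qq⁻¹ := sub_eq_zero.mp hcon
  have : qq ^ 2 = 1 := by
    rw [sq]; nth_rewrite 1 [h1]; exact inv_mul_cancel₀ qq_ne_zero
  exact qq_pow_ne_one 2 (by norm_num) this

lemma qint_pos_ne_zero (k : ℕ) : qint ((k : ℤ) + 1) ≠ 0 := by
  rw [qint, qintx]
  apply div_ne_zero _ denom_ne
  intro hcon
  have h1 : qq ^ ((k : ℤ) + 1) = qq ^ (-((k : ℤ) + 1)) := sub_eq_zero.mp hcon
  have h2 : qq ^ (2 * ((k : ℤ) + 1)) = 1 := by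
    rw [two_mul, zpow_add₀ qq_ne_zero]
    nth_rewrite 2 [h1]
    rw [← zpow_add₀ qq_ne_zero, show ((k:ℤ)+1) + -((k:ℤ)+1) = 0 by ring, zpow_zero]
  have h3 : qq ^ (2 * (k + 1)) = 1 := by
    have := h2
    rw [show (2 * ((k : ℤ) + 1)) = ((2 * (k + 1) : ℕ) : ℤ) by push_cast; ring, zpow_natCast] at this
    exact this
  exact qq_pow_ne_one _ (by positivity) h3

lemma qint_zero : qint 0 = 0 := by simp [qint, qintx]

lemma qfact_succ (m : ℕ) : qfact (m + 1) = qfact m * qint ((m : ℤ) + 1) := by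
  rw [qfact, qfactx, Finset.prod_range_succ]; rfl

lemma qfact_ne_zero (m : ℕ) : qfact m ≠ 0 := by
  induction m with
  | zero => simp [qfact, qfactx]
  | succ n ih => rw [qfact_succ]; exact mul_ne_zero ih (qint_pos_ne_zero n)

lemma dp_mul_x {A : Type*} [Ring A] [Algebra K A] (x : A) (r : ℕ) :
    dp x r * x = qint ((r : ℤ) + 1) • dp x (r + 1) := by
  rw [dp, dp, smul_mul_assoc, ← pow_succ, smul_smul]
  congr 1
  rw [qfact_succ, mul_inv]
  rw [← mul_assoc, mul_comm (qint ((r:ℤ)+1)), mul_assoc,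
    mul_inv_cancel₀ (qint_pos_ne_zero r), mul_one]

lemma x_mul_dp {A : Type*} [Ring A] [Algebra K A] (x : A) (r : ℕ) :
    x * dp x r = qint ((r : ℤ) + 1) • dp x (r + 1) := by
  rw [dp, dp, mul_smul_comm, ← pow_succ', smul_smul]
  congr 1
  rw [qfact_succ, mul_inv]
  rw [← mul_assoc, mul_comm (qint ((r:ℤ)+1)), mul_assoc,
    mul_inv_cancel₀ (qint_pos_ne_zero r), mul_one]

lemma key_scalar (e : ℤ) (he : e = 1 ∨ e = -1) (m r : ℤ) :
    qint (m + 1) * qq ^ (e * r * (2 - m)) =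
      qq ^ (e * r * (3 - m)) * qint (m + 1 - r) +
        qq ^ (e * (r * (3 - m) - (m + 1))) * qint r := by
  rw [qint, qint, qint, qintx, qintx, qintx]
  rw [div_mul_eq_mul_div, ← mul_div_assoc, ← mul_div_assoc, ← add_div]
  congr 1
  have hq := qq_ne_zero
  rcases he with rfl | rfl
  · simp only [sub_mul, mul_sub, one_mul, ← zpow_add₀ hq]
    rw [show m+1+(r*2-r*m) = r*3-r*m+(m+1-r) by ring,
        show r*3-r*m + -(m+1-r) = r*3-r*m-(m+1)+r by ring,
        show -(m+1)+(r*2-r*m) = r*3-r*m-(m+1)+ -r by ring]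
    ring
  · simp only [sub_mul, mul_sub, one_mul, ← zpow_add₀ hq]
    rw [show m+1+(-1*r*2 - -1*r*m) = -1*(r*3) - -1*(r*m) - -1*(m+1) + r by ring,
        show -(m+1)+(-1*r*2 - -1*r*m) = -1*r*3 - -1*r*m + -(m+1-r) by ring,
        show -1*(r*3) - -1*(r*m) - -1*(m+1) + -r = -1*r*3 - -1*r*m + (m+1-r) by ring]
    ring


lemma neg_one_zpow_sub_one (r : ℕ) : (-1 : K) ^ ((r : ℤ) - 1) = -((-1 : K) ^ r) := by
  rw [zpow_sub₀ (by norm_num : (-1 : K) ≠ 0), zpow_one, zpow_natCast]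
  field_simp

def FF {A : Type*} [Ring A] [Algebra K A] (x y : A) (e : ℤ) (m : ℕ) : A :=
  ∑ r ∈ Finset.range (m + 1),
    ((-1 : K) ^ r * qq ^ (e * (r : ℤ) * (3 - (m : ℤ)))) • (dp x r * y * dp x (m - r))

lemma step_rel {A : Type*} [Ring A] [Algebra K A] (x y : A) (e : ℤ) (he : e = 1 ∨ e = -1)
    (m : ℕ) :
    qint ((m : ℤ) + 1) • FF x y e (m + 1) =
      FF x y e m * x - qq ^ (e * (2 - 2 * (m : ℤ))) • (x * FF x y e m) := by
  have h1 : FF x y e m * x =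
      ∑ r ∈ Finset.range (m + 2),
        ((-1 : K) ^ r * qq ^ (e * (r : ℤ) * (3 - (m : ℤ))) * qint ((m : ℤ) + 1 - (r : ℤ))) •
          (dp x r * y * dp x (m + 1 - r)) := by
    rw [Finset.sum_range_succ]
    have hz : qint ((m : ℤ) + 1 - ((m + 1 : ℕ) : ℤ)) = 0 := by
      push_cast
      rw [show (m : ℤ) + 1 - ((m : ℤ) + 1) = 0 by ring, qint_zero]
    rw [hz, mul_zero, zero_smul, add_zero, FF, Finset.sum_mul]
    apply Finset.sum_congr rfl
    intro r hr
    have hrm : r ≤ m := Nat.lt_succ_iff.mp (Finset.mem_range.mp hr)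
    rw [smul_mul_assoc, mul_assoc (dp x r * y) (dp x (m - r)) x, dp_mul_x, mul_smul_comm, smul_smul]
    have hcast : ((m - r : ℕ) : ℤ) + 1 = (m : ℤ) + 1 - (r : ℤ) := by
      push_cast [hrm]; ring
    have hnat : m - r + 1 = m + 1 - r := by omega
    rw [hcast, hnat]
  have h2 : qq ^ (e * (2 - 2 * (m : ℤ))) • (x * FF x y e m) =
      ∑ r ∈ Finset.range (m + 2),
        (qq ^ (e * (2 - 2 * (m : ℤ))) *
          ((-1 : K) ^ ((r : ℤ) - 1) * qq ^ (e * ((r : ℤ) - 1) * (3 - (m : ℤ)))) * qint (r : ℤ)) •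
          (dp x r * y * dp x (m + 1 - r)) := by
    rw [Finset.sum_range_succ', FF, Finset.mul_sum, Finset.smul_sum]
    have hz : (qq ^ (e * (2 - 2 * (m : ℤ))) *
        ((-1 : K) ^ (((0 : ℕ) : ℤ) - 1) * qq ^ (e * (((0 : ℕ) : ℤ) - 1) * (3 - (m : ℤ)))) *
          qint ((0 : ℕ) : ℤ)) = 0 := by
      norm_num [qint_zero]
    rw [hz, zero_smul, add_zero]
    apply Finset.sum_congr rfl
    intro r hr
    have hassoc : x * (dp x r * y * dp x (m - r)) = (x * dp x r) * y * dp x (m - r) := by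
      rw [← mul_assoc, ← mul_assoc]
    rw [mul_smul_comm, hassoc, x_mul_dp, smul_mul_assoc, smul_mul_assoc, smul_smul, smul_smul]
    have hnat : m + 1 - (r + 1) = m - r := by omega
    rw [hnat]
    congr 1
    rw [neg_one_zpow_sub_one (r + 1)]
    push_cast
    rw [show ((r : ℤ) + 1 - 1) = (r : ℤ) by ring]
    rw [show (-1 : K) ^ (r + 1) = -((-1 : K) ^ r) by rw [pow_succ]; ring]
    ring
  rw [h1, h2, ← Finset.sum_sub_distrib, FF, Finset.smul_sum]
  apply Finset.sum_congr rfl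
  intro r hr
  rw [smul_smul, ← sub_smul]
  congr 1
  rw [neg_one_zpow_sub_one r]
  have hcomb : qq ^ (e * (2 - 2 * (m : ℤ))) * qq ^ (e * ((r : ℤ) - 1) * (3 - (m : ℤ))) =
      qq ^ (e * ((r : ℤ) * (3 - (m : ℤ)) - ((m : ℤ) + 1))) := by
    rw [← zpow_add₀ qq_ne_zero]
    congr 1
    ring
  have hk := key_scalar e he (m : ℤ) (r : ℤ)
  push_cast
  rw [show (3 : ℤ) - ((m : ℤ) + 1) = 2 - (m : ℤ) by ring]
  linear_combination ((-1 : K) ^ r) * hk - ((-1:K)^r * qint (r:ℤ)) * hcomb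


theorem stmt11 {A : Type*} [Ring A] [Algebra K A] (x y : A)
    (h : ∑ r ∈ Finset.range 4, ((-1 : K) ^ r) • (dp x r * y * dp x (3 - r)) = 0)
    (m : ℕ) (hm : 3 ≤ m) (e : ℤ) (he : e = 1 ∨ e = -1) :
    ∑ r ∈ Finset.range (m + 1),
      ((-1 : K) ^ r * qq ^ (e * (r : ℤ) * (3 - (m : ℤ)))) • (dp x r * y * dp x (m - r)) = 0 := by
  show FF x y e m = 0
  induction m, hm using Nat.le_induction with
  | base => simpa [FF] using h
  | succ n hn ih =>
    have hs := step_rel x y e he n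
    rw [ih, zero_mul, mul_zero, smul_zero, sub_zero] at hs
    have h2 := congrArg (fun z => (qint ((n : ℤ) + 1))⁻¹ • z) hs
    simpa [smul_smul, inv_mul_cancel₀ (qint_pos_ne_zero n)] using h2
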